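/- With K₁, K₂ and K₃ as in Theorems 4.1, 4.2 and 4.3 (the case cos θα − cos θβ cos θγ ≥ 0, with δx, δy, δz > 0 and common parameters n₁, n₂, n₃, t₁, t₂, t₃, m₁, m₂, m₃, ρ₁, ρ₂, ρ₃, ρ₄, ψ₁), define C₁ := I_{n₃} ⊗ I_{n₂} ⊗ K₁, C₂ := I_{n₃} ⊗ K₂ and C₃ := K₃, all in ℂ^{n×n} with n = n₁n₂n₃. Assume the compatibility relation ρ₂ = ρ₁ − ρ₁ρ₄ + ψ₁ if m₁ ≤ m₂, and ρ₂ = ρ₁ − 1 + ρ₂ρ₄ + ψ₁ if m₁ > m₂. Then C₁, C₂, C₃ pairwise commute: C₁C₂ = C₂C₁, C₁C₃ = C₃C₁, and C₂C₃ = C₃C₂. (Section 4.2: the discrete partial derivative matrices commute with each other.) -/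
import Mathlib


open Real Matrix

/-- The Yee discretization `K₁` of `∂x` with quasi-periodic boundary condition. -/
noncomputable def K1 (n₁ : ℕ) (δx t₁ : ℝ) : Matrix (Fin n₁) (Fin n₁) ℂ :=
  Matrix.of fun s s' =>
    (1 / (δx : ℂ)) *
      ((if (s' : ℕ) = (s : ℕ) + 1 then 1 else 0)
        + (if (s : ℕ) = n₁ - 1 ∧ (s' : ℕ) = 0
            then Complex.exp (2 * (π : ℂ) * Complex.I * (t₁ : ℂ)) else 0)
        - (if s = s' then 1 else 0))

/-- The `n₁×n₁` block `S(a) = [[0, e^{−2πι t₁} I_a], [I_{n₁−a}, 0]]`. -/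
noncomputable def Sblk (n₁ : ℕ) (t₁ : ℝ) (a : ℕ) : Matrix (Fin n₁) (Fin n₁) ℂ :=
  Matrix.of fun s s' =>
    (if (s : ℕ) < a ∧ (s' : ℕ) = (s : ℕ) + (n₁ - a)
      then Complex.exp (-(2 * (π : ℂ) * Complex.I * (t₁ : ℂ))) else 0)
    + (if a ≤ (s : ℕ) ∧ (s' : ℕ) + a = (s : ℕ) then 1 else 0)

/-- `J₂ = e^{2πι ρ₁ t₁} S(m₁)`. -/
noncomputable def J2 (n₁ : ℕ) (t₁ : ℝ) (ρ₁ m₁ : ℕ) : Matrix (Fin n₁) (Fin n₁) ℂ :=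
  Complex.exp (2 * (π : ℂ) * Complex.I * (ρ₁ : ℂ) * (t₁ : ℂ)) • Sblk n₁ t₁ m₁

/-- The Yee discretization `K₂` of `∂y` with quasi-periodic boundary conditions. -/
noncomputable def K2 (n₁ n₂ : ℕ) (δy t₁ t₂ : ℝ) (ρ₁ m₁ : ℕ) :
    Matrix (Fin n₂ × Fin n₁) (Fin n₂ × Fin n₁) ℂ :=
  Matrix.of fun p q =>
    (1 / (δy : ℂ)) *
      ((if (q.1 : ℕ) = (p.1 : ℕ) + 1 ∧ q.2 = p.2 then 1 else 0)
        + (if (p.1 : ℕ) = n₂ - 1 ∧ (q.1 : ℕ) = 0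
            then Complex.exp (2 * (π : ℂ) * Complex.I * (t₂ : ℂ)) * J2 n₁ t₁ ρ₁ m₁ p.2 q.2
            else 0)
        - (if p = q then 1 else 0))

/-- `J₁ = e^{2πι ρ₂ t₁} S(m₂)`. -/
noncomputable def J1 (n₁ : ℕ) (t₁ : ℝ) (ρ₂ m₂ : ℕ) : Matrix (Fin n₁) (Fin n₁) ℂ :=
  Complex.exp (2 * (π : ℂ) * Complex.I * (ρ₂ : ℂ) * (t₁ : ℂ)) • Sblk n₁ t₁ m₂

/-- `J₃` in the case `cos θα − cos θβ cos θγ ≥ 0`. -/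
noncomputable def J3acute (n₁ n₂ : ℕ) (t₁ t₂ : ℝ) (ρ₁ ρ₂ ρ₃ ρ₄ ψ₁ m₁ m₂ m₃ : ℕ) :
    Matrix (Fin n₂ × Fin n₁) (Fin n₂ × Fin n₁) ℂ :=
  Matrix.of fun p q =>
    Complex.exp (2 * (π : ℂ) * Complex.I * (ρ₃ : ℂ) * (t₂ : ℂ)) *
      ((if (p.1 : ℕ) < m₃ ∧ (q.1 : ℕ) = (p.1 : ℕ) + (n₂ - m₃) then
          (if m₁ ≤ m₂ then
            Complex.exp (-(2 * (π : ℂ) * Complex.I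
                * ((t₂ : ℂ) + (ρ₁ : ℂ) * (ρ₄ : ℂ) * (t₁ : ℂ) - (ψ₁ : ℂ) * (t₁ : ℂ))))
              * Sblk n₁ t₁ (m₂ - m₁) p.2 q.2
          else
            Complex.exp (-(2 * (π : ℂ) * Complex.I
                * ((t₂ : ℂ) - (ρ₂ : ℂ) * (ρ₄ : ℂ) * (t₁ : ℂ) - (ψ₁ : ℂ) * (t₁ : ℂ))))
              * Sblk n₁ t₁ (n₁ - m₁ + m₂) p.2 q.2)
        else 0)
      + (if m₃ ≤ (p.1 : ℕ) ∧ (q.1 : ℕ) + m₃ = (p.1 : ℕ)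
          then J1 n₁ t₁ ρ₂ m₂ p.2 q.2 else 0))

/-- The Yee discretization `K₃` of `∂z`. -/
noncomputable def K3 (n₁ n₂ n₃ : ℕ) (δz t₃ : ℝ)
    (J : Matrix (Fin n₂ × Fin n₁) (Fin n₂ × Fin n₁) ℂ) :
    Matrix (Fin n₃ × Fin n₂ × Fin n₁) (Fin n₃ × Fin n₂ × Fin n₁) ℂ :=
  Matrix.of fun p q =>
    (1 / (δz : ℂ)) *
      ((if (q.1 : ℕ) = (p.1 : ℕ) + 1 ∧ q.2 = p.2 then 1 else 0)
        + (if (p.1 : ℕ) = n₃ - 1 ∧ (q.1 : ℕ) = 0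
            then Complex.exp (2 * (π : ℂ) * Complex.I * (t₃ : ℂ)) * J p.2 q.2 else 0)
        - (if p = q then 1 else 0))

def twistM {R : Type*} [Ring R] (N k : ℕ) (v : ℕ → R) :
    Matrix (Fin N) (Fin N) R :=
  Matrix.of fun s s' => if (s' : ℕ) = ((s : ℕ) + k) % N then v (s : ℕ) else 0

theorem twistM_mul {R : Type*} [Ring R] (N k l : ℕ) (v w : ℕ → R) :
    twistM N k v * twistM N l w
      = twistM N (k + l) (fun i => v i * w ((i + k) % N)) := by
  ext s s'
  have hN : 0 < N := s.pos
  simp only [twistM, Matrix.mul_apply, Matrix.of_apply]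
  rw [Finset.sum_eq_single (⟨((s : ℕ) + k) % N, Nat.mod_lt _ hN⟩ : Fin N)]
  · simp only [if_pos rfl]
    rw [show (((s : ℕ) + k) % N + l) % N = ((s : ℕ) + (k + l)) % N by
      rw [Nat.mod_add_mod, Nat.add_assoc]]
    split_ifs <;> simp
  · intro r _ hr
    rw [if_neg, zero_mul]
    intro h
    exact hr (Fin.ext h)
  · intro h; exact absurd (Finset.mem_univ _) h

theorem twistM_congr {R : Type*} [Ring R] (N k : ℕ) {v w : ℕ → R}
    (h : ∀ i < N, v i = w i) : twistM N k v = twistM N k w := by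
  ext s s'
  simp only [twistM, Matrix.of_apply, h (s : ℕ) s.isLt]

theorem twistM_add_N {R : Type*} [Ring R] (N k : ℕ) (v : ℕ → R) :
    twistM N (k + N) v = twistM N k v := by
  ext s s'
  simp only [twistM, Matrix.of_apply, ← Nat.add_assoc, Nat.add_mod_right]

theorem twistM_smul {N : ℕ} (k : ℕ) (c : ℂ) (v : ℕ → ℂ) :
    c • twistM N k v = twistM N k (fun i => c * v i) := by
  ext s s'
  simp only [twistM, Matrix.smul_apply, Matrix.of_apply, smul_eq_mul, mul_ite, mul_zero]

theorem twistM_zero_one {R : Type*} [Ring R] (N : ℕ) :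
    twistM N 0 (fun _ => (1 : R)) = 1 := by
  ext s s'
  simp only [twistM, Matrix.of_apply, Nat.add_zero, Nat.mod_eq_of_lt s.isLt,
    Matrix.one_apply]
  by_cases h : s = s'
  · simp [h]
  · rw [if_neg h, if_neg (fun hh => h (Fin.ext hh.symm))]

def liftB {N : ℕ} {ι : Type*} (M : Matrix (Fin N) (Fin N) (Matrix ι ι ℂ)) :
    Matrix (Fin N × ι) (Fin N × ι) ℂ :=
  Matrix.of fun p q => M p.1 q.1 p.2 q.2

theorem liftB_mul {N : ℕ} {ι : Type*} [Fintype ι] [DecidableEq ι]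
    (M M' : Matrix (Fin N) (Fin N) (Matrix ι ι ℂ)) :
    liftB (M * M') = liftB M * liftB M' := by
  ext p q
  simp only [liftB, Matrix.mul_apply, Matrix.of_apply, Fintype.sum_prod_type]
  simp only [Matrix.sum_apply, Matrix.mul_apply]

noncomputable def ee (τ : ℝ) : ℂ := Complex.exp (2 * (π : ℂ) * Complex.I * (τ : ℂ))

theorem ee_add (x y : ℝ) : ee (x + y) = ee x * ee y := by
  rw [ee, ee, ee, ← Complex.exp_add]
  congr 1
  push_cast
  ring

theorem ee_zero : ee 0 = 1 := by simp [ee]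

noncomputable def Pl (N : ℕ) (c : ℂ) (k : ℕ) : Matrix (Fin N) (Fin N) ℂ :=
  twistM N k (fun i => if i + k < N then 1 else c)

theorem Pl_zero (N : ℕ) (c : ℂ) : Pl N c 0 = 1 := by
  rw [Pl, ← twistM_zero_one N]
  exact twistM_congr _ _ (fun i hi => by simp [Nat.lt_of_lt_of_le hi (le_refl N), hi])

theorem Pl_mul_le (N : ℕ) (c : ℂ) {k l : ℕ} (h : k + l ≤ N) :
    Pl N c k * Pl N c l = Pl N c (k + l) := by
  rw [Pl, Pl, Pl, twistM_mul]
  refine twistM_congr _ _ (fun i hi => ?_)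
  rcases Nat.lt_or_ge (i + k) N with h1 | h1
  · rw [Nat.mod_eq_of_lt h1]
    rcases Nat.lt_or_ge (i + k + l) N with h2 | h2
    · rw [if_pos h1, if_pos (by omega), if_pos (by omega), one_mul]
    · rw [if_pos h1, if_neg (by omega), if_neg (by omega), one_mul]
  · have hm : (i + k) % N = i + k - N := by
      rw [Nat.mod_eq_sub_mod h1, Nat.mod_eq_of_lt (by omega)]
    rw [hm, if_neg (by omega), if_pos (by omega), if_neg (by omega), mul_one]

theorem Pl_mul_ge (N : ℕ) (c : ℂ) {k l : ℕ} (hk : k ≤ N) (hl : l ≤ N)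
    (h : N ≤ k + l) : Pl N c k * Pl N c l = c • Pl N c (k + l - N) := by
  have hkl : k + l - N + N = k + l := by omega
  rw [Pl, Pl, Pl, twistM_mul, twistM_smul, ← twistM_add_N N (k + l - N), hkl]
  refine twistM_congr _ _ (fun i hi => ?_)
  rcases Nat.lt_or_ge (i + k) N with h1 | h1
  · rw [Nat.mod_eq_of_lt h1, if_pos h1, if_neg (by omega), one_mul,
      if_pos (by omega), mul_one]
  · have hm : (i + k) % N = i + k - N := by
      rw [Nat.mod_eq_sub_mod h1, Nat.mod_eq_of_lt (by omega)]
    rw [hm, if_neg (by omega)]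
    rcases Nat.lt_or_ge (i + k - N + l) N with h2 | h2
    · rw [if_pos h2, if_pos (by omega)]
    · rw [if_neg (by omega), if_neg (by omega)]

theorem ee_neg_eq (x : ℝ) :
    Complex.exp (-(2 * (π : ℂ) * Complex.I * (x : ℂ))) = ee (-x) := by
  rw [ee]; congr 1; push_cast; ring

theorem K1_rep (n₁ : ℕ) (hn₁ : 1 ≤ n₁) (δx t₁ : ℝ) :
    K1 n₁ δx t₁ = (1 / (δx : ℂ)) • (Pl n₁ (ee t₁) 1 - 1) := by
  ext s s'
  have hs := s.isLt
  have hs' := s'.isLt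
  simp only [K1, Pl, twistM, ee, Matrix.of_apply, Matrix.smul_apply,
    Matrix.sub_apply, Matrix.one_apply, smul_eq_mul]
  congr 1
  rcases Nat.lt_or_ge ((s : ℕ) + 1) n₁ with h | h
  · rw [Nat.mod_eq_of_lt h, if_pos h,
      if_neg (show ¬((s : ℕ) = n₁ - 1 ∧ (s' : ℕ) = 0) by omega), add_zero]
  · have h1 : (s : ℕ) + 1 = n₁ := by omega
    rw [h1, Nat.mod_self, if_neg (by omega : ¬(s' : ℕ) = n₁),
      if_neg (by omega : ¬n₁ < n₁), zero_add]
    by_cases h2 : (s' : ℕ) = 0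
    · rw [if_pos (by omega : (s : ℕ) = n₁ - 1 ∧ (s' : ℕ) = 0), if_pos h2]
    · rw [if_neg (by omega : ¬((s : ℕ) = n₁ - 1 ∧ (s' : ℕ) = 0)), if_neg h2]

theorem Sblk_rep (n₁ : ℕ) (t₁ : ℝ) {a : ℕ} (ha : a ≤ n₁) :
    Sblk n₁ t₁ a = ee (-t₁) • Pl n₁ (ee t₁) (n₁ - a) := by
  ext s s'
  have hs := s.isLt
  have hs' := s'.isLt
  simp only [Sblk, Pl, twistM, Matrix.of_apply, Matrix.smul_apply, smul_eq_mul,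
    ee_neg_eq]
  rcases Nat.lt_or_ge s a with h | h
  · have hmod : ((s : ℕ) + (n₁ - a)) % n₁ = (s : ℕ) + (n₁ - a) :=
      Nat.mod_eq_of_lt (by omega)
    rw [hmod, if_neg (by omega : ¬(a ≤ (s : ℕ) ∧ (s' : ℕ) + a = (s : ℕ))), add_zero]
    by_cases h2 : (s' : ℕ) = (s : ℕ) + (n₁ - a)
    · rw [if_pos ⟨h, h2⟩, if_pos h2, if_pos (by omega), mul_one]
    · rw [if_neg (by omega : ¬((s : ℕ) < a ∧ (s' : ℕ) = (s : ℕ) + (n₁ - a))),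
        if_neg h2, mul_zero]
  · have hmod : ((s : ℕ) + (n₁ - a)) % n₁ = (s : ℕ) - a := by
      rw [Nat.mod_eq_sub_mod (by omega), show (s:ℕ) + (n₁ - a) - n₁ = (s:ℕ) - a by omega,
        Nat.mod_eq_of_lt (by omega)]
    rw [hmod, if_neg (by omega : ¬((s : ℕ) < a ∧ (s' : ℕ) = (s : ℕ) + (n₁ - a))),
      zero_add]
    by_cases h2 : (s' : ℕ) = (s : ℕ) - a
    · rw [if_pos (by omega : a ≤ (s : ℕ) ∧ (s' : ℕ) + a = (s : ℕ)), if_pos h2,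
        if_neg (by omega : ¬((s : ℕ) + (n₁ - a) < n₁)), ← ee_add]
      norm_num [ee_zero]
    · rw [if_neg (by omega : ¬(a ≤ (s : ℕ) ∧ (s' : ℕ) + a = (s : ℕ))), if_neg h2,
        mul_zero]

theorem K2_rep (n₁ n₂ : ℕ) (hn₂ : 1 ≤ n₂) (δy t₁ t₂ : ℝ) (ρ₁ m₁ : ℕ) :
    K2 n₁ n₂ δy t₁ t₂ ρ₁ m₁
      = liftB ((1 / (δy : ℂ)) •
          (twistM n₂ 1 (fun i => if i + 1 = n₂ then ee t₂ • J2 n₁ t₁ ρ₁ m₁ else 1)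
            - 1)) := by
  ext ⟨a, b⟩ ⟨a', b'⟩
  have ha := a.isLt
  have ha' := a'.isLt
  simp only [K2, liftB, twistM, ee, Matrix.of_apply, Matrix.smul_apply,
    Matrix.sub_apply, smul_eq_mul,
    apply_ite (fun M : Matrix (Fin n₁) (Fin n₁) ℂ => M b b'),
    Matrix.zero_apply, Matrix.one_apply, Prod.mk.injEq, ite_and]
  congr 1
  rcases Nat.lt_or_ge ((a : ℕ) + 1) n₂ with h | h
  · rw [Nat.mod_eq_of_lt h, if_neg (by omega : ¬(a : ℕ) + 1 = n₂),
      if_neg (by omega : ¬(a : ℕ) = n₂ - 1), add_zero]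
    split_ifs <;> first | rfl | omega | simp_all
  · have h1 : (a : ℕ) + 1 = n₂ := by omega
    rw [h1, Nat.mod_self, if_pos rfl, if_neg (by omega : ¬(a' : ℕ) = n₂), zero_add,
      if_pos (by omega : (a : ℕ) = n₂ - 1)]

noncomputable def X3 (n₁ : ℕ) (t₁ t₂ : ℝ) (ρ₁ ρ₂ ρ₄ ψ₁ m₁ m₂ : ℕ) :
    Matrix (Fin n₁) (Fin n₁) ℂ :=
  if m₁ ≤ m₂ then
    Complex.exp (-(2 * (π : ℂ) * Complex.I
        * ((t₂ : ℂ) + (ρ₁ : ℂ) * (ρ₄ : ℂ) * (t₁ : ℂ) - (ψ₁ : ℂ) * (t₁ : ℂ))))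
      • Sblk n₁ t₁ (m₂ - m₁)
  else
    Complex.exp (-(2 * (π : ℂ) * Complex.I
        * ((t₂ : ℂ) - (ρ₂ : ℂ) * (ρ₄ : ℂ) * (t₁ : ℂ) - (ψ₁ : ℂ) * (t₁ : ℂ))))
      • Sblk n₁ t₁ (n₁ - m₁ + m₂)

theorem J3_rep (n₁ n₂ : ℕ) (t₁ t₂ : ℝ) (ρ₁ ρ₂ ρ₃ ρ₄ ψ₁ m₁ m₂ m₃ : ℕ)
    (hm₃ : m₃ ≤ n₂) :
    J3acute n₁ n₂ t₁ t₂ ρ₁ ρ₂ ρ₃ ρ₄ ψ₁ m₁ m₂ m₃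
      = Complex.exp (2 * (π : ℂ) * Complex.I * (ρ₃ : ℂ) * (t₂ : ℂ)) •
          liftB (twistM n₂ (n₂ - m₃) (fun i =>
            if i + (n₂ - m₃) < n₂ then X3 n₁ t₁ t₂ ρ₁ ρ₂ ρ₄ ψ₁ m₁ m₂
            else J1 n₁ t₁ ρ₂ m₂)) := by
  ext ⟨a, b⟩ ⟨a', b'⟩
  have ha := a.isLt
  have ha' := a'.isLt
  simp only [J3acute, X3, liftB, twistM, Matrix.of_apply, Matrix.smul_apply,
    smul_eq_mul, Matrix.zero_apply,
    apply_ite (fun M : Matrix (Fin n₁) (Fin n₁) ℂ => M b b')]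
  congr 1
  rcases Nat.lt_or_ge (a : ℕ) m₃ with h | h
  · have hmod : ((a : ℕ) + (n₂ - m₃)) % n₂ = (a : ℕ) + (n₂ - m₃) :=
      Nat.mod_eq_of_lt (by omega)
    rw [hmod, if_neg (by omega : ¬(m₃ ≤ (a : ℕ) ∧ (a' : ℕ) + m₃ = (a : ℕ))), add_zero]
    by_cases h2 : (a' : ℕ) = (a : ℕ) + (n₂ - m₃)
    · rw [if_pos ⟨h, h2⟩, if_pos h2,
        if_pos (show (a : ℕ) + (n₂ - m₃) < n₂ by omega)]
    · rw [if_neg (by omega : ¬((a : ℕ) < m₃ ∧ (a' : ℕ) = (a : ℕ) + (n₂ - m₃))),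
        if_neg h2]
  · have hmod : ((a : ℕ) + (n₂ - m₃)) % n₂ = (a : ℕ) - m₃ := by
      rw [Nat.mod_eq_sub_mod (by omega),
        show (a : ℕ) + (n₂ - m₃) - n₂ = (a : ℕ) - m₃ by omega,
        Nat.mod_eq_of_lt (by omega)]
    rw [hmod, if_neg (by omega : ¬((a : ℕ) < m₃ ∧ (a' : ℕ) = (a : ℕ) + (n₂ - m₃))),
      zero_add]
    by_cases h2 : (a' : ℕ) = (a : ℕ) - m₃
    · rw [if_pos (by omega : m₃ ≤ (a : ℕ) ∧ (a' : ℕ) + m₃ = (a : ℕ)), if_pos h2,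
        if_neg (by omega : ¬((a : ℕ) + (n₂ - m₃) < n₂))]
    · rw [if_neg (by omega : ¬(m₃ ≤ (a : ℕ) ∧ (a' : ℕ) + m₃ = (a : ℕ))), if_neg h2]

theorem Kgen_rep (N : ℕ) (hN : 1 ≤ N) {ι : Type*} [Fintype ι] [DecidableEq ι]
    (δ t : ℝ) (J : Matrix ι ι ℂ) :
    (Matrix.of fun p q : Fin N × ι =>
      (1 / (δ : ℂ)) *
        ((if (q.1 : ℕ) = (p.1 : ℕ) + 1 ∧ q.2 = p.2 then 1 else 0)
          + (if (p.1 : ℕ) = N - 1 ∧ (q.1 : ℕ) = 0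
              then Complex.exp (2 * (π : ℂ) * Complex.I * (t : ℂ)) * J p.2 q.2 else 0)
          - (if p = q then 1 else 0)))
      = liftB ((1 / (δ : ℂ)) •
          (twistM N 1 (fun i =>
            if i + 1 = N then Complex.exp (2 * (π : ℂ) * Complex.I * (t : ℂ)) • J
            else 1) - 1)) := by
  ext ⟨a, b⟩ ⟨a', b'⟩
  have ha := a.isLt
  have ha' := a'.isLt
  simp only [liftB, twistM, Matrix.of_apply, Matrix.smul_apply,
    Matrix.sub_apply, smul_eq_mul,
    apply_ite (fun M : Matrix ι ι ℂ => M b b'),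
    Matrix.zero_apply, Matrix.one_apply, Prod.mk.injEq, ite_and]
  congr 1
  rcases Nat.lt_or_ge ((a : ℕ) + 1) N with h | h
  · rw [Nat.mod_eq_of_lt h, if_neg (by omega : ¬(a : ℕ) + 1 = N),
      if_neg (by omega : ¬(a : ℕ) = N - 1), add_zero]
    split_ifs <;> first | rfl | omega | simp_all
  · have h1 : (a : ℕ) + 1 = N := by omega
    rw [h1, Nat.mod_self, if_pos rfl, if_neg (by omega : ¬(a' : ℕ) = N), zero_add,
      if_pos (by omega : (a : ℕ) = N - 1)]

theorem diag_rep (N : ℕ) {ι : Type*} [Fintype ι] [DecidableEq ι] (A : Matrix ι ι ℂ) :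
    (Matrix.of fun p q : Fin N × ι => if p.1 = q.1 then A p.2 q.2 else 0)
      = liftB (twistM N 0 (fun _ => A)) := by
  ext ⟨a, b⟩ ⟨a', b'⟩
  simp only [liftB, twistM, Matrix.of_apply, Nat.add_zero,
    Nat.mod_eq_of_lt a.isLt, Matrix.zero_apply,
    apply_ite (fun M : Matrix ι ι ℂ => M b b')]
  by_cases h : a = a'
  · rw [if_pos h, if_pos (show ((a' : Fin N) : ℕ) = (a : ℕ) by rw [h])]
  · rw [if_neg h, if_neg (show ¬((a' : Fin N) : ℕ) = (a : ℕ) from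
      fun hh => h (Fin.ext hh.symm))]

theorem comm_smul_right {A : Type*} [Ring A] [Algebra ℂ A] {a b : A}
    (h : a * b = b * a) (c : ℂ) : a * (c • b) = (c • b) * a := by
  rw [mul_smul_comm, smul_mul_assoc, h]

theorem comm_smul_left {A : Type*} [Ring A] [Algebra ℂ A] {a b : A}
    (h : a * b = b * a) (c : ℂ) : (c • a) * b = b * (c • a) := by
  rw [smul_mul_assoc, mul_smul_comm, h]

theorem comm_smul_sub_one {A : Type*} [Ring A] [Algebra ℂ A] {a b : A}
    (h : a * b = b * a) (c : ℂ) : a * (c • (b - 1)) = (c • (b - 1)) * a := by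
  refine comm_smul_right ?_ c
  rw [mul_sub, sub_mul, h, mul_one, one_mul]

theorem Pl_comm (N : ℕ) (c : ℂ) {k l : ℕ} (hk : k ≤ N) (hl : l ≤ N) :
    Pl N c k * Pl N c l = Pl N c l * Pl N c k := by
  rcases Nat.lt_or_ge (k + l) N with h | h
  · rw [Pl_mul_le N c (le_of_lt h), Pl_mul_le N c (by omega : l + k ≤ N),
      Nat.add_comm]
  · rw [Pl_mul_ge N c hk hl h, Pl_mul_ge N c hl hk (by omega),
      Nat.add_comm]

theorem twist_comm {R : Type*} [Ring R] (N k l : ℕ) (v w : ℕ → R)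
    (hcomm : ∀ i < N, v i * w ((i + k) % N) = w i * v ((i + l) % N)) :
    twistM N k v * twistM N l w = twistM N l w * twistM N k v := by
  rw [twistM_mul, twistM_mul, Nat.add_comm l k]
  exact twistM_congr _ _ hcomm

theorem dg_comm {R : Type*} [Ring R] (N k : ℕ) (d : R) (v : ℕ → R)
    (h : ∀ i < N, d * v i = v i * d) :
    twistM N 0 (fun _ => d) * twistM N k v
      = twistM N k v * twistM N 0 (fun _ => d) := by
  refine twist_comm N 0 k _ _ (fun i hi => ?_)
  rw [Nat.add_zero, Nat.mod_eq_of_lt hi]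
  exact h i hi

theorem dg_dg_comm {R : Type*} [Ring R] (N : ℕ) (a b : R) (h : a * b = b * a) :
    twistM N 0 (fun _ => a) * twistM N 0 (fun _ => b)
      = twistM N 0 (fun _ => b) * twistM N 0 (fun _ => a) := by
  exact twist_comm N 0 0 _ _ (fun i hi => h)

theorem shift_gen_comm {R : Type*} [Ring R] (N : ℕ) (hN : 1 ≤ N)
    (k : ℕ) (hk : k ≤ N) (c X : R) (hcX : c * X = X * c) :
    twistM N 1 (fun i => if i + 1 = N then c else 1)
        * twistM N k (fun i => if i + k < N then X else c * X)
      = twistM N k (fun i => if i + k < N then X else c * X)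
        * twistM N 1 (fun i => if i + 1 = N then c else 1) := by
  refine twist_comm N 1 k _ _ (fun i hi => ?_)
  rcases Nat.lt_or_ge (i + 1) N with h1 | h1
  · rw [Nat.mod_eq_of_lt h1, if_neg (by omega : ¬i + 1 = N), one_mul]
    rcases Nat.lt_or_ge (i + k) N with h2 | h2
    · rw [Nat.mod_eq_of_lt h2, if_pos h2]
      rcases Nat.lt_or_ge (i + 1 + k) N with h3 | h3
      · rw [if_pos (by omega : i + 1 + k < N),
          if_neg (by omega : ¬i + k + 1 = N), mul_one]
      · rw [if_neg (by omega : ¬i + 1 + k < N),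
          if_pos (by omega : i + k + 1 = N)]
        exact hcX
    · have hm : (i + k) % N = i + k - N := by
        rw [Nat.mod_eq_sub_mod h2, Nat.mod_eq_of_lt (by omega)]
      rw [hm, if_neg (by omega : ¬i + k < N),
        if_neg (by omega : ¬i + 1 + k < N),
        if_neg (by omega : ¬i + k - N + 1 = N), mul_one]
  · have h1' : i + 1 = N := by omega
    rw [if_pos h1', h1', Nat.mod_self, Nat.zero_add]
    rcases Nat.lt_or_ge k N with h2 | h2
    · rw [if_pos h2]
      rcases Nat.eq_zero_or_pos k with h3 | h3
      · subst h3
        rw [if_pos (by omega : i + 0 < N), Nat.add_zero,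
          Nat.mod_eq_of_lt (by omega), if_pos h1']
        exact hcX
      · have hm : (i + k) % N = k - 1 := by
          rw [Nat.mod_eq_sub_mod (by omega), Nat.mod_eq_of_lt (by omega)]
          omega
        rw [if_neg (by omega : ¬i + k < N), hm,
          if_neg (by omega : ¬k - 1 + 1 = N), mul_one]
    · have h2' : k = N := by omega
      have hm : (i + k) % N = N - 1 := by
        rw [Nat.mod_eq_sub_mod (by omega), Nat.mod_eq_of_lt (by omega)]
        omega
      rw [if_neg (by omega : ¬k < N), if_neg (by omega : ¬i + k < N), hm,
        if_pos (by omega : N - 1 + 1 = N)]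
      conv_rhs => rw [mul_assoc, ← hcX]

theorem exp_ee {z : ℂ} (x : ℝ) (h : z = 2 * (π : ℂ) * Complex.I * (x : ℂ)) :
    Complex.exp z = ee x := by rw [h, ee]

theorem smulPl_comm (N : ℕ) (c : ℂ) {k l : ℕ} (hk : k ≤ N) (hl : l ≤ N)
    (z w : ℂ) :
    (z • Pl N c k) * (w • Pl N c l) = (w • Pl N c l) * (z • Pl N c k) :=
  comm_smul_left (comm_smul_right (Pl_comm N c hk hl) w) z

theorem K1_Pl_comm (n₁ : ℕ) (hn₁ : 1 ≤ n₁) (δx t₁ : ℝ) {k : ℕ} (hk : k ≤ n₁)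
    (z : ℂ) :
    K1 n₁ δx t₁ * (z • Pl n₁ (ee t₁) k)
      = (z • Pl n₁ (ee t₁) k) * K1 n₁ δx t₁ := by
  rw [K1_rep n₁ hn₁ δx t₁]
  refine comm_smul_left (comm_smul_right ?_ z) (1 / (δx : ℂ))
  rw [sub_mul, mul_sub, one_mul, mul_one, Pl_comm n₁ (ee t₁) hn₁ hk]

theorem J2_rep (n₁ : ℕ) (t₁ : ℝ) (ρ₁ m₁ : ℕ) (hm₁ : m₁ ≤ n₁) :
    J2 n₁ t₁ ρ₁ m₁
      = (ee ((ρ₁ : ℝ) * t₁) * ee (-t₁)) • Pl n₁ (ee t₁) (n₁ - m₁) := by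
  rw [J2, Sblk_rep n₁ t₁ hm₁, exp_ee ((ρ₁ : ℝ) * t₁) (by push_cast; ring),
    smul_smul]

theorem J1_rep (n₁ : ℕ) (t₁ : ℝ) (ρ₂ m₂ : ℕ) (hm₂ : m₂ ≤ n₁) :
    J1 n₁ t₁ ρ₂ m₂
      = (ee ((ρ₂ : ℝ) * t₁) * ee (-t₁)) • Pl n₁ (ee t₁) (n₁ - m₂) := by
  rw [J1, Sblk_rep n₁ t₁ hm₂, exp_ee ((ρ₂ : ℝ) * t₁) (by push_cast; ring),
    smul_smul]

theorem X3_rep (n₁ : ℕ) (t₁ t₂ : ℝ) (ρ₁ ρ₂ ρ₄ ψ₁ m₁ m₂ : ℕ)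
    (hm₁ : m₁ ≤ n₁) (hm₂ : m₂ ≤ n₁) :
    ∃ (z : ℂ) (k : ℕ), k ≤ n₁ ∧ X3 n₁ t₁ t₂ ρ₁ ρ₂ ρ₄ ψ₁ m₁ m₂ = z • Pl n₁ (ee t₁) k := by
  rw [X3]
  by_cases h : m₁ ≤ m₂
  · refine ⟨ee (-(t₂ + ρ₁ * ρ₄ * t₁ - ψ₁ * t₁)) * ee (-t₁), n₁ - (m₂ - m₁),
      by omega, ?_⟩
    rw [if_pos h, Sblk_rep n₁ t₁ (by omega : m₂ - m₁ ≤ n₁),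
      exp_ee (-(t₂ + ρ₁ * ρ₄ * t₁ - ψ₁ * t₁)) (by push_cast; ring), smul_smul]
  · refine ⟨ee (-(t₂ - ρ₂ * ρ₄ * t₁ - ψ₁ * t₁)) * ee (-t₁), n₁ - (n₁ - m₁ + m₂),
      by omega, ?_⟩
    rw [if_neg h, Sblk_rep n₁ t₁ (by omega : n₁ - m₁ + m₂ ≤ n₁),
      exp_ee (-(t₂ - ρ₂ * ρ₄ * t₁ - ψ₁ * t₁)) (by push_cast; ring), smul_smul]

theorem key_eq (n₁ : ℕ) (hn₁ : 1 ≤ n₁) (t₁ t₂ : ℝ) (ρ₁ ρ₂ ρ₄ ψ₁ m₁ m₂ : ℕ)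
    (hm₁ : m₁ ≤ n₁) (hm₂ : m₂ ≤ n₁)
    (hcompat₁ : m₁ ≤ m₂ → (ρ₂ : ℤ) = (ρ₁ : ℤ) - (ρ₁ : ℤ) * ρ₄ + ψ₁)
    (hcompat₂ : m₂ < m₁ → (ρ₂ : ℤ) = (ρ₁ : ℤ) - 1 + (ρ₂ : ℤ) * ρ₄ + ψ₁) :
    (ee t₂ • J2 n₁ t₁ ρ₁ m₁) * X3 n₁ t₁ t₂ ρ₁ ρ₂ ρ₄ ψ₁ m₁ m₂
      = J1 n₁ t₁ ρ₂ m₂ := by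
  rw [J2_rep n₁ t₁ ρ₁ m₁ hm₁, J1_rep n₁ t₁ ρ₂ m₂ hm₂, smul_smul, X3]
  by_cases h : m₁ ≤ m₂
  · have hρ : (ρ₂ : ℝ) = (ρ₁ : ℝ) - (ρ₁ : ℝ) * ρ₄ + ψ₁ := by
      exact_mod_cast hcompat₁ h
    rw [if_pos h, Sblk_rep n₁ t₁ (by omega : m₂ - m₁ ≤ n₁),
      exp_ee (-(t₂ + ρ₁ * ρ₄ * t₁ - ψ₁ * t₁)) (by push_cast; ring), smul_smul,
      smul_mul_assoc, mul_smul_comm, smul_smul,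
      Pl_mul_ge n₁ (ee t₁) (by omega : n₁ - m₁ ≤ n₁)
        (by omega : n₁ - (m₂ - m₁) ≤ n₁) (by omega), smul_smul,
      show n₁ - m₁ + (n₁ - (m₂ - m₁)) - n₁ = n₁ - m₂ by omega]
    congr 1
    simp only [← ee_add]
    congr 1
    linear_combination (-t₁) * hρ
  · have hρ : (ρ₂ : ℝ) = (ρ₁ : ℝ) - 1 + (ρ₂ : ℝ) * ρ₄ + ψ₁ := by
      exact_mod_cast hcompat₂ (by omega)
    rw [if_neg h, Sblk_rep n₁ t₁ (by omega : n₁ - m₁ + m₂ ≤ n₁),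
      exp_ee (-(t₂ - ρ₂ * ρ₄ * t₁ - ψ₁ * t₁)) (by push_cast; ring), smul_smul,
      smul_mul_assoc, mul_smul_comm, smul_smul,
      Pl_mul_le n₁ (ee t₁) (by omega : n₁ - m₁ + (n₁ - (n₁ - m₁ + m₂)) ≤ n₁),
      show n₁ - m₁ + (n₁ - (n₁ - m₁ + m₂)) = n₁ - m₂ by omega]
    congr 1
    rw [← ee_add, ← ee_add, ← ee_add, ← ee_add, ← ee_add]
    congr 1
    linear_combination (-t₁) * hρ

theorem K3_rep (n₁ n₂ n₃ : ℕ) (hn₃ : 1 ≤ n₃) (δz t₃ : ℝ)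
    (J : Matrix (Fin n₂ × Fin n₁) (Fin n₂ × Fin n₁) ℂ) :
    K3 n₁ n₂ n₃ δz t₃ J
      = liftB ((1 / (δz : ℂ)) •
          (twistM n₃ 1 (fun i =>
            if i + 1 = n₃ then Complex.exp (2 * (π : ℂ) * Complex.I * (t₃ : ℂ)) • J
            else 1) - 1)) :=
  Kgen_rep n₃ hn₃ δz t₃ J

/-- Section 4.2: `C₁ = I_{n₃} ⊗ I_{n₂} ⊗ K₁`, `C₂ = I_{n₃} ⊗ K₂`, `C₃ = K₃`
(the case `cos θα − cos θβ cos θγ ≥ 0`) pairwise commute. -/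
theorem stmt_10 (n₁ n₂ n₃ : ℕ) (hn₁ : 1 ≤ n₁) (hn₂ : 1 ≤ n₂) (hn₃ : 1 ≤ n₃)
    (δx δy δz : ℝ) (hδx : 0 < δx) (hδy : 0 < δy) (hδz : 0 < δz) (t₁ t₂ t₃ : ℝ)
    (ρ₁ ρ₂ ρ₃ ρ₄ ψ₁ : ℕ) (hρ₁ : ρ₁ ≤ 1) (hρ₂ : ρ₂ ≤ 1) (hρ₃ : ρ₃ ≤ 1)
    (hρ₄ : ρ₄ ≤ 1) (hψ₁ : ψ₁ ≤ 1)
    (m₁ m₂ m₃ : ℕ) (hm₁ : m₁ ≤ n₁) (hm₂ : m₂ ≤ n₁) (hm₃ : m₃ ≤ n₂)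
    (hcompat₁ : m₁ ≤ m₂ → (ρ₂ : ℤ) = (ρ₁ : ℤ) - (ρ₁ : ℤ) * ρ₄ + ψ₁)
    (hcompat₂ : m₂ < m₁ → (ρ₂ : ℤ) = (ρ₁ : ℤ) - 1 + (ρ₂ : ℤ) * ρ₄ + ψ₁)
    (C₁ C₂ C₃ : Matrix (Fin n₃ × Fin n₂ × Fin n₁) (Fin n₃ × Fin n₂ × Fin n₁) ℂ)
    (hC₁ : C₁ = Matrix.of fun p q =>
      if p.1 = q.1 ∧ p.2.1 = q.2.1 then K1 n₁ δx t₁ p.2.2 q.2.2 else 0)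
    (hC₂ : C₂ = Matrix.of fun p q =>
      if p.1 = q.1 then K2 n₁ n₂ δy t₁ t₂ ρ₁ m₁ p.2 q.2 else 0)
    (hC₃ : C₃ = K3 n₁ n₂ n₃ δz t₃ (J3acute n₁ n₂ t₁ t₂ ρ₁ ρ₂ ρ₃ ρ₄ ψ₁ m₁ m₂ m₃)) :
    C₁ * C₂ = C₂ * C₁ ∧ C₁ * C₃ = C₃ * C₁ ∧ C₂ * C₃ = C₃ * C₂ := by
  -- level-1 data
  obtain ⟨zX, kX, hkX, hXrep⟩ := X3_rep n₁ t₁ t₂ ρ₁ ρ₂ ρ₄ ψ₁ m₁ m₂ hm₁ hm₂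
  have hc2rep : ee t₂ • J2 n₁ t₁ ρ₁ m₁
      = (ee t₂ * (ee ((ρ₁ : ℝ) * t₁) * ee (-t₁))) • Pl n₁ (ee t₁) (n₁ - m₁) := by
    rw [J2_rep n₁ t₁ ρ₁ m₁ hm₁, smul_smul]
  have hK1c2 : K1 n₁ δx t₁ * (ee t₂ • J2 n₁ t₁ ρ₁ m₁)
      = (ee t₂ • J2 n₁ t₁ ρ₁ m₁) * K1 n₁ δx t₁ := by
    rw [hc2rep]; exact K1_Pl_comm n₁ hn₁ δx t₁ (by omega) _
  have hK1X : K1 n₁ δx t₁ * X3 n₁ t₁ t₂ ρ₁ ρ₂ ρ₄ ψ₁ m₁ m₂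
      = X3 n₁ t₁ t₂ ρ₁ ρ₂ ρ₄ ψ₁ m₁ m₂ * K1 n₁ δx t₁ := by
    rw [hXrep]; exact K1_Pl_comm n₁ hn₁ δx t₁ hkX _
  have hK1J1 : K1 n₁ δx t₁ * J1 n₁ t₁ ρ₂ m₂ = J1 n₁ t₁ ρ₂ m₂ * K1 n₁ δx t₁ := by
    rw [J1_rep n₁ t₁ ρ₂ m₂ hm₂]; exact K1_Pl_comm n₁ hn₁ δx t₁ (by omega) _
  have hc2X : (ee t₂ • J2 n₁ t₁ ρ₁ m₁) * X3 n₁ t₁ t₂ ρ₁ ρ₂ ρ₄ ψ₁ m₁ m₂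
      = X3 n₁ t₁ t₂ ρ₁ ρ₂ ρ₄ ψ₁ m₁ m₂ * (ee t₂ • J2 n₁ t₁ ρ₁ m₁) := by
    rw [hc2rep, hXrep]; exact smulPl_comm n₁ (ee t₁) (by omega) hkX _ _
  have hkey := key_eq n₁ hn₁ t₁ t₂ ρ₁ ρ₂ ρ₄ ψ₁ m₁ m₂ hm₁ hm₂ hcompat₁ hcompat₂
  -- level-2 commutation
  have hDQ : twistM n₂ 0 (fun _ => K1 n₁ δx t₁)
        * twistM n₂ 1 (fun i => if i + 1 = n₂ then ee t₂ • J2 n₁ t₁ ρ₁ m₁ else 1)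
      = twistM n₂ 1 (fun i => if i + 1 = n₂ then ee t₂ • J2 n₁ t₁ ρ₁ m₁ else 1)
        * twistM n₂ 0 (fun _ => K1 n₁ δx t₁) := by
    refine dg_comm n₂ 1 _ _ (fun i hi => ?_)
    by_cases hh : i + 1 = n₂
    · rw [if_pos hh]; exact hK1c2
    · rw [if_neg hh, mul_one, one_mul]
  have hDM : twistM n₂ 0 (fun _ => K1 n₁ δx t₁)
        * twistM n₂ (n₂ - m₃) (fun i =>
            if i + (n₂ - m₃) < n₂ then X3 n₁ t₁ t₂ ρ₁ ρ₂ ρ₄ ψ₁ m₁ m₂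
            else J1 n₁ t₁ ρ₂ m₂)
      = twistM n₂ (n₂ - m₃) (fun i =>
            if i + (n₂ - m₃) < n₂ then X3 n₁ t₁ t₂ ρ₁ ρ₂ ρ₄ ψ₁ m₁ m₂
            else J1 n₁ t₁ ρ₂ m₂)
        * twistM n₂ 0 (fun _ => K1 n₁ δx t₁) := by
    refine dg_comm n₂ (n₂ - m₃) _ _ (fun i hi => ?_)
    by_cases hh : i + (n₂ - m₃) < n₂
    · rw [if_pos hh]; exact hK1X
    · rw [if_neg hh]; exact hK1J1
  have hfun : (fun i => if i + (n₂ - m₃) < n₂ then X3 n₁ t₁ t₂ ρ₁ ρ₂ ρ₄ ψ₁ m₁ m₂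
        else J1 n₁ t₁ ρ₂ m₂)
      = fun i => if i + (n₂ - m₃) < n₂ then X3 n₁ t₁ t₂ ρ₁ ρ₂ ρ₄ ψ₁ m₁ m₂
        else (ee t₂ • J2 n₁ t₁ ρ₁ m₁) * X3 n₁ t₁ t₂ ρ₁ ρ₂ ρ₄ ψ₁ m₁ m₂ := by
    funext i; rw [hkey]
  have hQM : twistM n₂ 1 (fun i => if i + 1 = n₂ then ee t₂ • J2 n₁ t₁ ρ₁ m₁ else 1)
        * twistM n₂ (n₂ - m₃) (fun i =>
            if i + (n₂ - m₃) < n₂ then X3 n₁ t₁ t₂ ρ₁ ρ₂ ρ₄ ψ₁ m₁ m₂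
            else J1 n₁ t₁ ρ₂ m₂)
      = twistM n₂ (n₂ - m₃) (fun i =>
            if i + (n₂ - m₃) < n₂ then X3 n₁ t₁ t₂ ρ₁ ρ₂ ρ₄ ψ₁ m₁ m₂
            else J1 n₁ t₁ ρ₂ m₂)
        * twistM n₂ 1 (fun i => if i + 1 = n₂ then ee t₂ • J2 n₁ t₁ ρ₁ m₁ else 1) := by
    rw [hfun]
    exact shift_gen_comm n₂ hn₂ (n₂ - m₃) (by omega) _ _ hc2X
  -- level-3 ingredients
  have hDB2 : twistM n₂ 0 (fun _ => K1 n₁ δx t₁)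
        * ((1 / (δy : ℂ)) • (twistM n₂ 1
            (fun i => if i + 1 = n₂ then ee t₂ • J2 n₁ t₁ ρ₁ m₁ else 1) - 1))
      = ((1 / (δy : ℂ)) • (twistM n₂ 1
            (fun i => if i + 1 = n₂ then ee t₂ • J2 n₁ t₁ ρ₁ m₁ else 1) - 1))
        * twistM n₂ 0 (fun _ => K1 n₁ δx t₁) := comm_smul_sub_one hDQ _
  have hB2M : ((1 / (δy : ℂ)) • (twistM n₂ 1
            (fun i => if i + 1 = n₂ then ee t₂ • J2 n₁ t₁ ρ₁ m₁ else 1) - 1))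
        * twistM n₂ (n₂ - m₃) (fun i =>
            if i + (n₂ - m₃) < n₂ then X3 n₁ t₁ t₂ ρ₁ ρ₂ ρ₄ ψ₁ m₁ m₂
            else J1 n₁ t₁ ρ₂ m₂)
      = twistM n₂ (n₂ - m₃) (fun i =>
            if i + (n₂ - m₃) < n₂ then X3 n₁ t₁ t₂ ρ₁ ρ₂ ρ₄ ψ₁ m₁ m₂
            else J1 n₁ t₁ ρ₂ m₂)
        * ((1 / (δy : ℂ)) • (twistM n₂ 1
            (fun i => if i + 1 = n₂ then ee t₂ • J2 n₁ t₁ ρ₁ m₁ else 1) - 1)) :=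
    (comm_smul_sub_one hQM.symm _).symm
  -- C reps
  have hC1' : C₁ = liftB (twistM n₃ 0
      (fun _ => liftB (twistM n₂ 0 (fun _ => K1 n₁ δx t₁)))) := by
    rw [hC₁]
    have e1 : (Matrix.of fun p q : Fin n₃ × Fin n₂ × Fin n₁ =>
          if p.1 = q.1 ∧ p.2.1 = q.2.1 then K1 n₁ δx t₁ p.2.2 q.2.2 else 0)
        = Matrix.of (fun p q : Fin n₃ × Fin n₂ × Fin n₁ =>
          if p.1 = q.1 then (Matrix.of fun r r' : Fin n₂ × Fin n₁ =>
            if r.1 = r'.1 then K1 n₁ δx t₁ r.2 r'.2 else 0) p.2 q.2 else 0) := by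
      ext p q
      simp only [Matrix.of_apply, ite_and]
    rw [e1]
    simp only [diag_rep n₂ (K1 n₁ δx t₁)]
    rw [diag_rep n₃ _]
  have hC2' : C₂ = liftB (twistM n₃ 0 (fun _ => liftB ((1 / (δy : ℂ)) •
      (twistM n₂ 1 (fun i => if i + 1 = n₂ then ee t₂ • J2 n₁ t₁ ρ₁ m₁ else 1)
        - 1)))) := by
    rw [hC₂, diag_rep n₃ (K2 n₁ n₂ δy t₁ t₂ ρ₁ m₁)]
    simp only [K2_rep n₁ n₂ hn₂ δy t₁ t₂ ρ₁ m₁]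
  have hC3' : C₃ = liftB ((1 / (δz : ℂ)) • (twistM n₃ 1 (fun i =>
      if i + 1 = n₃ then
        Complex.exp (2 * (π : ℂ) * Complex.I * (t₃ : ℂ)) •
          (Complex.exp (2 * (π : ℂ) * Complex.I * (ρ₃ : ℂ) * (t₂ : ℂ)) •
            liftB (twistM n₂ (n₂ - m₃) (fun j =>
              if j + (n₂ - m₃) < n₂ then X3 n₁ t₁ t₂ ρ₁ ρ₂ ρ₄ ψ₁ m₁ m₂
              else J1 n₁ t₁ ρ₂ m₂)))
      else 1) - 1)) := by
    rw [hC₃, K3_rep n₁ n₂ n₃ hn₃ δz t₃ _]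
    simp only [J3_rep n₁ n₂ t₁ t₂ ρ₁ ρ₂ ρ₃ ρ₄ ψ₁ m₁ m₂ m₃ hm₃]
  -- big-block commutes
  have hA1M3 : liftB (twistM n₂ 0 (fun _ => K1 n₁ δx t₁))
        * liftB (twistM n₂ (n₂ - m₃) (fun j =>
            if j + (n₂ - m₃) < n₂ then X3 n₁ t₁ t₂ ρ₁ ρ₂ ρ₄ ψ₁ m₁ m₂
            else J1 n₁ t₁ ρ₂ m₂))
      = liftB (twistM n₂ (n₂ - m₃) (fun j =>
            if j + (n₂ - m₃) < n₂ then X3 n₁ t₁ t₂ ρ₁ ρ₂ ρ₄ ψ₁ m₁ m₂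
            else J1 n₁ t₁ ρ₂ m₂))
        * liftB (twistM n₂ 0 (fun _ => K1 n₁ δx t₁)) := by
    rw [← liftB_mul, ← liftB_mul, hDM]
  have hB2M3 : liftB ((1 / (δy : ℂ)) • (twistM n₂ 1
          (fun i => if i + 1 = n₂ then ee t₂ • J2 n₁ t₁ ρ₁ m₁ else 1) - 1))
        * liftB (twistM n₂ (n₂ - m₃) (fun j =>
            if j + (n₂ - m₃) < n₂ then X3 n₁ t₁ t₂ ρ₁ ρ₂ ρ₄ ψ₁ m₁ m₂
            else J1 n₁ t₁ ρ₂ m₂))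
      = liftB (twistM n₂ (n₂ - m₃) (fun j =>
            if j + (n₂ - m₃) < n₂ then X3 n₁ t₁ t₂ ρ₁ ρ₂ ρ₄ ψ₁ m₁ m₂
            else J1 n₁ t₁ ρ₂ m₂))
        * liftB ((1 / (δy : ℂ)) • (twistM n₂ 1
          (fun i => if i + 1 = n₂ then ee t₂ • J2 n₁ t₁ ρ₁ m₁ else 1) - 1)) := by
    rw [← liftB_mul, ← liftB_mul, hB2M]
  refine ⟨?_, ?_, ?_⟩
  · rw [hC1', hC2', ← liftB_mul, ← liftB_mul]
    rw [dg_dg_comm n₃ _ _ (by rw [← liftB_mul, ← liftB_mul, hDB2])]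
  · rw [hC1', hC3', ← liftB_mul, ← liftB_mul]
    rw [comm_smul_sub_one (b := twistM n₃ 1 _) ?_ (1 / (δz : ℂ))]
    refine dg_comm n₃ 1 _ _ (fun i hi => ?_)
    by_cases hh : i + 1 = n₃
    · rw [if_pos hh]
      exact comm_smul_right (comm_smul_right hA1M3 _) _
    · rw [if_neg hh, mul_one, one_mul]
  · rw [hC2', hC3', ← liftB_mul, ← liftB_mul]
    rw [comm_smul_sub_one (b := twistM n₃ 1 _) ?_ (1 / (δz : ℂ))]
    refine dg_comm n₃ 1 _ _ (fun i hi => ?_)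
    by_cases hh : i + 1 = n₃
    · rw [if_pos hh]
      exact comm_smul_right (comm_smul_right hB2M3 _) _
    · rw [if_neg hh, mul_one, one_mul]
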